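/- arXiv:2107.06474 — 6 statements merged into one kernel-verified Lean document; each statement's English description precedes it below -/
import Mathlib

section
/- Let C be an algebraically closed field of characteristic zero, and let A be an m×m matrix and B an n×n matrix over C. The C-linear map f on the space of m×n matrices defined by f(X) = AX − XB has spectrum equal to the set of differences {a − b : a an eigenvalue of A, b an eigenvalue of B}. -/
open Polynomial Matrix Module

lemma aux_charpoly_eval {k : ℕ} {K : Type*} [Field K] (M : Matrix (Fin k) (Fin k) K) (r : K) :
    M.charpoly.eval r = det (algebraMap K (Matrix (Fin k) (Fin k) K) r - M) := by
  rw [Matrix.charpoly, _root_.eval_det, matPolyEquiv_charmatrix, eval_sub, eval_X, eval_C]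
  congr 1

lemma aux_mem_spectrum_iff {k : ℕ} {K : Type*} [Field K] (M : Matrix (Fin k) (Fin k) K) (r : K) :
    r ∈ spectrum K M ↔ M.charpoly.IsRoot r := by
  rw [spectrum.mem_iff, Matrix.isUnit_iff_isUnit_det, isUnit_iff_ne_zero, not_ne_iff,
    IsRoot, aux_charpoly_eval]

lemma aux_isUnit_list_prod {M : Type*} [Monoid M] (s : List M)
    (h : ∀ x ∈ s, IsUnit x) : IsUnit s.prod := by
  induction s with
  | nil => simp
  | cons a s ih =>
    rw [List.prod_cons]
    exact ((h a (List.mem_cons_self)).mul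
      (ih fun x hx => h x (List.mem_cons_of_mem a hx)))

lemma aux_sylvester_aeval {k l : ℕ} {K : Type*} [CommRing K]
    (A : Matrix (Fin k) (Fin k) K) (B' : Matrix (Fin l) (Fin l) K)
    (X : Matrix (Fin k) (Fin l) K) (h : A * X = X * B') (p : K[X]) :
    (aeval A p) * X = X * (aeval B' p) := by
  have hpow : ∀ j : ℕ, A ^ j * X = X * B' ^ j := by
    intro j
    induction j with
    | zero => simp
    | succ j ih =>
      rw [pow_succ', pow_succ', Matrix.mul_assoc, ih, ← Matrix.mul_assoc, h, Matrix.mul_assoc]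
  induction p using Polynomial.induction_on' with
  | add p q hp hq => simp only [map_add, Matrix.add_mul, Matrix.mul_add, hp, hq]
  | monomial j a =>
    simp only [aeval_monomial, Algebra.algebraMap_eq_smul_one, Matrix.smul_mul,
      Matrix.mul_smul, one_mul, hpow]

/-- The spectrum of the Sylvester operator `X ↦ AX - XB` on `m×n` matrices over an
algebraically closed field of characteristic zero is the set of differences of
eigenvalues of `A` and `B`. -/
theorem stmt_0 {C : Type*} [Field C] [IsAlgClosed C] [CharZero C]
    (m n : ℕ) (A : Matrix (Fin m) (Fin m) C) (B : Matrix (Fin n) (Fin n) C)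
    (f : Module.End C (Matrix (Fin m) (Fin n) C))
    (hf : ∀ X, f X = A * X - X * B) :
    spectrum C f = {d | ∃ a ∈ spectrum C A, ∃ b ∈ spectrum C B, d = a - b} := by
  ext μ
  simp only [Set.mem_setOf_eq]
  constructor
  · intro hμ
    obtain ⟨X, hX⟩ := (Module.End.hasEigenvalue_iff_mem_spectrum.mpr hμ).exists_hasEigenvector
    have hXne : X ≠ 0 := hX.right
    set B' : Matrix (Fin n) (Fin n) C := B + algebraMap C _ μ with hB'
    have hAX : A * X = X * B' := by
      have h1 : A * X - X * B = μ • X := by rw [← hf X]; exact hX.apply_eq_smul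
      have h2 : X * algebraMap C (Matrix (Fin n) (Fin n) C) μ = μ • X := by
        rw [Algebra.algebraMap_eq_smul_one, Matrix.mul_smul, Matrix.mul_one]
      rw [hB', Matrix.mul_add, h2, ← h1]
      abel
    have h0 : X * aeval B' A.charpoly = 0 := by
      rw [← aux_sylvester_aeval A B' X hAX, Matrix.aeval_self_charpoly, Matrix.zero_mul]
    have hnu : ¬ IsUnit (aeval B' A.charpoly) := by
      rintro ⟨u, hu⟩
      apply hXne
      calc X = X * (↑u * ↑u⁻¹ : Matrix (Fin n) (Fin n) C) := by rw [u.mul_inv, Matrix.mul_one]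
        _ = (X * aeval B' A.charpoly) * (↑u⁻¹ : Matrix (Fin n) (Fin n) C) := by rw [← Matrix.mul_assoc, hu]
        _ = 0 := by rw [h0, Matrix.zero_mul]
    have hprod : A.charpoly
        = (A.charpoly.roots.map (fun r => Polynomial.X - Polynomial.C r)).prod :=
      (IsAlgClosed.splits _).eq_prod_roots_of_monic (Matrix.charpoly_monic A)
    have haeval : aeval B' A.charpoly
        = ((A.charpoly.roots.map (fun r => Polynomial.X - Polynomial.C r)).toList.map
            (aeval B')).prod := by
      conv_lhs => rw [hprod, ← Multiset.prod_toList]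
      exact map_list_prod (aeval B' : Polynomial C →ₐ[C] _) _
    rw [haeval] at hnu
    have : ∃ r ∈ A.charpoly.roots, ¬ IsUnit (B' - algebraMap C _ r) := by
      by_contra hcon
      push_neg at hcon
      refine hnu (aux_isUnit_list_prod _ ?_)
      intro x hx
      obtain ⟨q, hq, rfl⟩ := List.mem_map.mp hx
      rw [Multiset.mem_toList, Multiset.mem_map] at hq
      obtain ⟨r, hr, rfl⟩ := hq
      have : aeval B' (Polynomial.X - Polynomial.C r) = B' - algebraMap C _ r := by
        simp
      rw [this]
      exact hcon r hr
    obtain ⟨r, hr, hrnu⟩ := this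
    refine ⟨r, (aux_mem_spectrum_iff A r).mpr (isRoot_of_mem_roots hr), r - μ, ?_, by ring⟩
    rw [spectrum.mem_iff]
    intro hunit
    apply hrnu
    have heq : B' - algebraMap C (Matrix (Fin n) (Fin n) C) r
        = -(algebraMap C (Matrix (Fin n) (Fin n) C) (r - μ) - B) := by
      rw [hB', map_sub]
      abel
    rw [heq]
    exact hunit.neg
  · rintro ⟨a, ha, b, hb, rfl⟩
    -- right eigenvector of A
    have hdA : det (algebraMap C (Matrix (Fin m) (Fin m) C) a - A) = 0 := by
      have := spectrum.mem_iff.mp ha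
      rwa [Matrix.isUnit_iff_isUnit_det, isUnit_iff_ne_zero, not_ne_iff] at this
    obtain ⟨v, hv0, hv⟩ := (Matrix.exists_mulVec_eq_zero_iff).mpr hdA
    have hAv : A *ᵥ v = a • v := by
      have h := hv
      rw [Matrix.sub_mulVec, sub_eq_zero] at h
      rw [← h, Algebra.algebraMap_eq_smul_one, Matrix.smul_mulVec, Matrix.one_mulVec]
    -- left eigenvector of B
    have hdB : det ((algebraMap C (Matrix (Fin n) (Fin n) C) b - B)ᵀ) = 0 := by
      rw [Matrix.det_transpose]
      have := spectrum.mem_iff.mp hb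
      rwa [Matrix.isUnit_iff_isUnit_det, isUnit_iff_ne_zero, not_ne_iff] at this
    obtain ⟨w, hw0, hw⟩ := (Matrix.exists_mulVec_eq_zero_iff).mpr hdB
    have hwB : w ᵥ* B = b • w := by
      have h := hw
      rw [Matrix.transpose_sub, Matrix.sub_mulVec, sub_eq_zero] at h
      have h2 : Bᵀ *ᵥ w = b • w := by
        rw [← h]
        have h3 : (algebraMap C (Matrix (Fin n) (Fin n) C) b)ᵀ
            = algebraMap C (Matrix (Fin n) (Fin n) C) b := by
          simp [Matrix.algebraMap_eq_diagonal]
        rw [h3, Algebra.algebraMap_eq_smul_one, Matrix.smul_mulVec, Matrix.one_mulVec]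
      rw [← Matrix.mulVec_transpose, h2]
    set X : Matrix (Fin m) (Fin n) C := Matrix.of fun i j => v i * w j with hXdef
    have hXne : X ≠ 0 := by
      obtain ⟨i, hi⟩ := Function.ne_iff.mp hv0
      obtain ⟨j, hj⟩ := Function.ne_iff.mp hw0
      intro h
      have hz : X i j = 0 := by rw [h]; rfl
      rw [hXdef] at hz
      exact mul_ne_zero hi hj hz
    have hfX : f X = (a - b) • X := by
      rw [hf]
      ext i j
      have hA : (A * X) i j = a * (v i * w j) := by
        have h4 : (A * X) i j = (A *ᵥ v) i * w j := by
          simp [hXdef, Matrix.mul_apply, Matrix.mulVec, dotProduct, Finset.sum_mul, mul_assoc]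
        rw [h4, hAv]
        simp [smul_eq_mul, mul_assoc]
      have hB : (X * B) i j = b * (v i * w j) := by
        have h5 : (X * B) i j = v i * (w ᵥ* B) j := by
          simp [hXdef, Matrix.mul_apply, Matrix.vecMul, dotProduct, Finset.mul_sum, mul_assoc]
        rw [h5, hwB]
        simp only [Pi.smul_apply, smul_eq_mul]
        ring
      simp only [Matrix.sub_apply, Matrix.smul_apply, hA, hB, smul_eq_mul]
      rw [hXdef]
      simp only [Matrix.of_apply]
      ring
    exact Module.End.hasEigenvalue_iff_mem_spectrum.mp
      (Module.End.hasEigenvalue_of_hasEigenvector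
        ⟨Module.End.mem_eigenspace_iff.mpr hfX, hXne⟩)
end

section
/- Let R be a complete local noetherian algebra over an algebraically closed field C of characteristic zero, with residue field C and maximal ideal r. Let A be an n×n matrix over R whose reduction modulo r has no two distinct eigenvalues differing by an integer. Then for every nonzero integer ν, the R-linear map X ↦ νX − (AX − XA) on M_n(R) is bijective. -/
open Polynomial Matrix

private lemma comm_pow {F : Type*} [Field F] {n : ℕ} (B C' X : Matrix (Fin n) (Fin n) F)
    (h : B * X = X * C') : ∀ k : ℕ, B ^ k * X = X * C' ^ k := by
  intro k
  induction k with
  | zero => simp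
  | succ k ih =>
    rw [pow_succ, pow_succ, mul_assoc, h, ← mul_assoc, ih, mul_assoc]

private lemma comm_aeval {F : Type*} [Field F] {n : ℕ} (B C' X : Matrix (Fin n) (Fin n) F)
    (h : B * X = X * C') (p : F[X]) : aeval B p * X = X * aeval C' p := by
  induction p using Polynomial.induction_on' with
  | add p q hp hq => simp [map_add, add_mul, mul_add, hp, hq]
  | monomial k a =>
    simp only [aeval_monomial]
    rw [mul_assoc, comm_pow B C' X h k, ← mul_assoc, Algebra.commutes, mul_assoc]

private lemma root_charpoly_mem_spectrum {F : Type*} [Field F] {n : ℕ}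
    (M : Matrix (Fin n) (Fin n) F) (c : F) (hc : M.charpoly.IsRoot c) :
    c ∈ spectrum F M := by
  rw [spectrum.mem_iff]
  intro hu
  rw [Matrix.isUnit_iff_isUnit_det] at hu
  have h1 : (charmatrix M).map (evalRingHom c) = algebraMap F (Matrix (Fin n) (Fin n) F) c - M := by
    ext i j
    by_cases hij : i = j
    · subst hij
      simp [charmatrix_apply_eq, Matrix.algebraMap_matrix_apply]
    · simp [charmatrix_apply_ne _ _ _ hij, Matrix.algebraMap_matrix_apply, hij]
  have h2 : (algebraMap F (Matrix (Fin n) (Fin n) F) c - M).det = 0 := by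
    have h3 := RingHom.map_det (evalRingHom c) M.charmatrix
    rw [RingHom.mapMatrix_apply] at h3
    rw [← h1, ← h3]
    simpa [Matrix.charpoly] using hc
  rw [h2] at hu
  exact hu.ne_zero rfl

private lemma unit_prod {F : Type*} [Field F] {n : ℕ} (D : Matrix (Fin n) (Fin n) F)
    (s : Multiset F) (h : ∀ c ∈ s, IsUnit (D - algebraMap F (Matrix (Fin n) (Fin n) F) c)) :
    IsUnit (aeval D (s.map fun c => X - C c).prod) := by
  induction s using Multiset.induction_on with
  | empty => simp
  | cons a s ih =>
    rw [Multiset.map_cons, Multiset.prod_cons, _root_.map_mul]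
    refine IsUnit.mul ?_ (ih fun c hc => h c (Multiset.mem_cons_of_mem hc))
    have : aeval D (X - C a) = D - algebraMap F (Matrix (Fin n) (Fin n) F) a := by
      simp [Algebra.algebraMap_eq_smul_one]
    rw [this]
    exact h a (Multiset.mem_cons_self a s)

private lemma key_bij {F : Type*} [Field F] [IsAlgClosed F] [CharZero F] {n : ℕ}
    (B : Matrix (Fin n) (Fin n) F)
    (hsp : ∀ a ∈ spectrum F B, ∀ b ∈ spectrum F B, a ≠ b → ∀ k : ℤ, a - b ≠ (k : F))
    (ν : ℤ) (hν : ν ≠ 0) :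
    Function.Bijective (fun X : Matrix (Fin n) (Fin n) F =>
      (ν : F) • X - (B * X - X * B)) := by
  set L : Matrix (Fin n) (Fin n) F →ₗ[F] Matrix (Fin n) (Fin n) F :=
    (ν : F) • LinearMap.id - (LinearMap.mulLeft F B - LinearMap.mulRight F B) with hLdef
  have hL : (fun X : Matrix (Fin n) (Fin n) F => (ν : F) • X - (B * X - X * B)) = ⇑L := by
    funext X
    simp [hLdef, LinearMap.mulLeft_apply, LinearMap.mulRight_apply]
  rw [hL]
  have hinj : Function.Injective L := by
    rw [← LinearMap.ker_eq_bot, LinearMap.ker_eq_bot']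
    intro X hX
    simp only [hLdef, LinearMap.sub_apply, LinearMap.smul_apply, LinearMap.id_apply,
      LinearMap.mulLeft_apply, LinearMap.mulRight_apply] at hX
    rw [sub_eq_zero] at hX
    -- hX : (ν:F) • X = B * X - X * B
    have hBX : (B - (ν : F) • 1) * X = X * B := by
      rw [sub_mul, smul_mul_assoc, one_mul, hX]
      exact sub_sub_cancel _ _
    have hker : aeval (B - (ν : F) • 1) B.charpoly * X = 0 := by
      rw [comm_aeval _ _ _ hBX, Matrix.aeval_self_charpoly, mul_zero]
    have hm := Matrix.charpoly_monic B
    have hs : B.charpoly.Splits := IsAlgClosed.splits B.charpoly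
    have hprod := hs.eq_prod_roots_of_monic hm
    have hunit : IsUnit (aeval (B - (ν : F) • 1) B.charpoly) := by
      rw [hprod]
      apply unit_prod
      intro c hcr
      have hc : c ∈ spectrum F B :=
        root_charpoly_mem_spectrum B c (Polynomial.isRoot_of_mem_roots hcr)
      have hnot : ((ν : F) + c) ∉ spectrum F B := by
        intro hmem
        have hne : (ν : F) + c ≠ c := by
          simp [hν]
        exact hsp _ hmem _ hc hne ν (by ring)
      have hu := spectrum.notMem_iff.mp hnot
      have heq : B - (ν : F) • 1 - algebraMap F (Matrix (Fin n) (Fin n) F) c =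
          -(algebraMap F (Matrix (Fin n) (Fin n) F) ((ν : F) + c) - B) := by
        simp [Algebra.algebraMap_eq_smul_one, add_smul]
        abel
      rw [heq]
      exact hu.neg
    exact hunit.mul_left_cancel (by rw [mul_zero, hker])
  exact ⟨hinj, (LinearMap.injective_iff_surjective).mp hinj⟩

private lemma entries_mem_smul {R : Type*} [CommRing R] {n : ℕ} (I : Ideal R)
    (M : Matrix (Fin n) (Fin n) R) (h : ∀ i j, M i j ∈ I) :
    M ∈ I • (⊤ : Submodule R (Matrix (Fin n) (Fin n) R)) := by
  rw [matrix_eq_sum_single M]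
  refine Submodule.sum_mem _ fun i _ => Submodule.sum_mem _ fun j _ => ?_
  have hsb : Matrix.single i j (M i j) = (M i j) • Matrix.single i j (1 : R) := by
    rw [smul_single]; simp
  rw [hsb]
  exact Submodule.smul_mem_smul (h i j) Submodule.mem_top


/-- Let `R` be a complete local noetherian `C`-algebra with residue field `C`. If the
reduction of `A` modulo the maximal ideal has no two distinct eigenvalues differing by an
integer, then for every nonzero integer `ν` the `R`-linear map `X ↦ νX - (AX - XA)` on
`n×n` matrices over `R` is bijective. -/
theorem stmt_2 {C R : Type*} [Field C] [IsAlgClosed C] [CharZero C]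
    [CommRing R] [Algebra C R] [IsNoetherianRing R] [IsLocalRing R]
    [IsAdicComplete (IsLocalRing.maximalIdeal R) R]
    (hres : Function.Bijective (algebraMap C (R ⧸ IsLocalRing.maximalIdeal R)))
    (n : ℕ) (A : Matrix (Fin n) (Fin n) R) (Abar : Matrix (Fin n) (Fin n) C)
    (hAbar : A.map (Ideal.Quotient.mk (IsLocalRing.maximalIdeal R)) =
      Abar.map (algebraMap C (R ⧸ IsLocalRing.maximalIdeal R)))
    (hsp : ∀ a ∈ spectrum C Abar, ∀ b ∈ spectrum C Abar, a ≠ b → ∀ k : ℤ, a - b ≠ (k : C)) :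
    ∀ ν : ℤ, ν ≠ 0 →
      Function.Bijective
        (fun X : Matrix (Fin n) (Fin n) R => (ν : R) • X - (A * X - X * A)) := by
  intro ν hν
  set m : Ideal R := IsLocalRing.maximalIdeal R with hm
  set π : R →+* R ⧸ m := Ideal.Quotient.mk m with hπ
  set e : C →+* R ⧸ m := algebraMap C (R ⧸ m) with he
  set Ab : Matrix (Fin n) (Fin n) (R ⧸ m) := A.map π with hAb
  -- bijectivity of the reduced operator on the residue field
  have hSk : Function.Bijective (fun Y : Matrix (Fin n) (Fin n) (R ⧸ m) =>
      ((ν : R ⧸ m)) • Y - (Ab * Y - Y * Ab)) := by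
    have hAb' : Ab = Abar.map e := hAbar
    rw [hAb']
    have hbC := key_bij Abar hsp ν hν
    set mapE : Matrix (Fin n) (Fin n) C → Matrix (Fin n) (Fin n) (R ⧸ m) :=
      fun M => M.map e with hmapE
    have hEsurj : Function.Surjective mapE := by
      intro N
      refine ⟨Matrix.of fun i j => (hres.2 (N i j)).choose, ?_⟩
      ext i j
      exact (hres.2 (N i j)).choose_spec
    have hEinj : Function.Injective mapE := by
      intro M N hMN
      ext i j
      exact hres.1 (by
        have := congrFun (congrFun hMN i) j
        simpa [hmapE, Matrix.map_apply] using this)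
    have hcomm : ∀ X, mapE ((ν : C) • X - (Abar * X - X * Abar)) =
        (ν : R ⧸ m) • mapE X - (Abar.map e * mapE X - mapE X * Abar.map e) := by
      intro X
      ext i j
      simp [hmapE, Matrix.map_apply, Matrix.sub_apply, Matrix.smul_apply, Matrix.mul_apply,
        map_sub, map_sum, _root_.map_mul, smul_eq_mul, map_intCast]
    constructor
    · intro Y1 Y2 h12
      obtain ⟨X1, rfl⟩ := hEsurj Y1
      obtain ⟨X2, rfl⟩ := hEsurj Y2
      simp only [] at h12
      rw [← hcomm X1, ← hcomm X2] at h12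
      exact congrArg mapE (hbC.1 (hEinj h12))
    · intro Yk
      obtain ⟨Z, rfl⟩ := hEsurj Yk
      obtain ⟨X, hX⟩ := hbC.2 Z
      refine ⟨mapE X, ?_⟩
      show (ν : R ⧸ m) • mapE X - (Abar.map e * mapE X - mapE X * Abar.map e) = mapE Z
      rw [← hcomm X]
      exact congrArg mapE hX
  -- the operator over R as a linear map
  set f : Matrix (Fin n) (Fin n) R →ₗ[R] Matrix (Fin n) (Fin n) R :=
    (ν : R) • LinearMap.id - (LinearMap.mulLeft R A - LinearMap.mulRight R A) with hf
  have hfapp : ∀ X, f X = (ν : R) • X - (A * X - X * A) := by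
    intro X
    simp [hf, LinearMap.sub_apply, LinearMap.smul_apply, LinearMap.id_apply,
      LinearMap.mulLeft_apply, LinearMap.mulRight_apply]
  have hred : ∀ X : Matrix (Fin n) (Fin n) R,
      (f X).map π = (ν : R ⧸ m) • (X.map π) - (Ab * X.map π - X.map π * Ab) := by
    intro X
    rw [hfapp X]
    ext i j
    simp [hAb, Matrix.map_apply, Matrix.sub_apply, Matrix.smul_apply, Matrix.mul_apply,
      map_sub, map_sum, _root_.map_mul, smul_eq_mul, map_intCast, Finset.mul_sum,
      Finset.sum_sub_distrib]
  have hsurj : Function.Surjective f := by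
    set N := LinearMap.range f with hN
    have hNtop : N = ⊤ := by
      have hfin : (⊤ : Submodule R (Matrix (Fin n) (Fin n) R ⧸ N)).FG :=
        Module.finite_def.mp inferInstance
      have hle : (⊤ : Submodule R (Matrix (Fin n) (Fin n) R ⧸ N)) ≤ m • ⊤ := by
        rintro q -
        obtain ⟨Y, rfl⟩ := Submodule.mkQ_surjective N q
        obtain ⟨Z, hZ⟩ := hSk.2 (Y.map π)
        set X : Matrix (Fin n) (Fin n) R :=
          Matrix.of fun i j => (Ideal.Quotient.mk_surjective (Z i j)).choose with hX
        have hXπ : X.map π = Z := by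
          ext i j
          exact (Ideal.Quotient.mk_surjective (Z i j)).choose_spec
        have h1 : (f X).map π = Y.map π := by
          rw [hred X, hXπ]; exact hZ
        have h2 : ∀ i j, (Y - f X) i j ∈ m := by
          intro i j
          have h1' : ((f X).map π) i j = (Y.map π) i j := by rw [h1]
          simp only [Matrix.map_apply] at h1'
          rw [Matrix.sub_apply]
          exact Ideal.Quotient.eq.mp h1'.symm
        have h3 : (Y - f X) ∈ m • (⊤ : Submodule R (Matrix (Fin n) (Fin n) R)) :=
          entries_mem_smul m _ h2
        have h4 : N.mkQ Y = N.mkQ (Y - f X) := by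
          rw [map_sub, show N.mkQ (f X) = 0 from
            (Submodule.Quotient.mk_eq_zero N).mpr (LinearMap.mem_range_self f X), sub_zero]
        rw [h4]
        have h5 : N.mkQ (Y - f X) ∈ Submodule.map N.mkQ
            (m • (⊤ : Submodule R (Matrix (Fin n) (Fin n) R))) :=
          Submodule.mem_map_of_mem h3
        rw [Submodule.map_smul''] at h5
        exact smul_mono_right m (le_top : Submodule.map N.mkQ ⊤ ≤ ⊤) h5
      have hbot := Submodule.eq_bot_of_le_smul_of_le_jacobson_bot m ⊤ hfin hle
        (IsLocalRing.maximalIdeal_le_jacobson ⊥)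
      rw [Submodule.eq_top_iff']
      intro Y
      rw [← Submodule.Quotient.mk_eq_zero]
      have hY : (Submodule.Quotient.mk Y : _ ⧸ N) ∈ (⊥ : Submodule R _) :=
        hbot ▸ Submodule.mem_top
      simpa using hY
    intro Y
    exact LinearMap.mem_range.mp (hNtop.ge Submodule.mem_top)
  have hinj : Function.Injective f :=
    OrzechProperty.injective_of_surjective_endomorphism f hsurj
  have hfun : (fun X : Matrix (Fin n) (Fin n) R => (ν : R) • X - (A * X - X * A)) = ⇑f := by
    funext X; rw [hfapp]
  rw [hfun]
  exact ⟨hinj, hsurj⟩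
end

section
/- Let Λ be a commutative finite-dimensional algebra over an algebraically closed field C of characteristic zero, n ⊂ Λ a nilpotent ideal, V a finite Λ-module, and A : V → V a Λ-linear endomorphism. Let V̄ = V/nV and let Ā be the induced endomorphism of V̄. Then the image of the generalized eigenspace G(A, ρ) in V̄ equals the generalized eigenspace G(Ā, ρ), and the spectrum of Ā equals the spectrum of A. -/
/-- If a family `G` of submodules is independent, `W i ≤ G i` for all `i`, and `x` lies in
both `G ρ` and `⨆ i, W i`, then `x ∈ W ρ`. -/
lemma aux_mem_of_indep {R M ι : Type*} [Ring R] [AddCommGroup M] [Module R M]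
    {G W : ι → Submodule R M} (hind : iSupIndep G) (hWG : ∀ i, W i ≤ G i)
    {ρ : ι} {x : M} (hx : x ∈ G ρ) (hx' : x ∈ ⨆ i, W i) : x ∈ W ρ := by
  have hle : (⨆ i, W i) ≤ W ρ ⊔ ⨆ (j) (_ : j ≠ ρ), G j := by
    refine iSup_le fun i => ?_
    by_cases h : i = ρ
    · subst h; exact le_sup_left
    · exact le_trans (hWG i) (le_trans (le_iSup₂ (f := fun j (_ : j ≠ ρ) => G j) i h) le_sup_right)
  obtain ⟨w, hw, y, hy, hxy⟩ := Submodule.mem_sup.mp (hle hx')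
  have hyG : y ∈ G ρ := by
    have : y = x - w := by rw [← hxy]; abel
    rw [this]
    exact Submodule.sub_mem _ hx (hWG ρ hw)
  have : y = 0 := (Submodule.mem_bot R).mp ((hind ρ).le_bot ⟨hyG, hy⟩)
  rw [← hxy, this, add_zero]
  exact hw

/-- A submodule contained in its product with a nilpotent ideal is trivial. -/
lemma smul_nilpotent_eq_bot {Λ V : Type*} [CommRing Λ] [AddCommGroup V] [Module Λ V]
    {n : Ideal Λ} (hn : ∃ k : ℕ, n ^ k = ⊥) {G : Submodule Λ V} (hG : G ≤ n • G) :
    G = ⊥ := by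
  obtain ⟨k, hk⟩ := hn
  have hiter : ∀ j : ℕ, G ≤ n ^ j • G := by
    intro j
    induction j with
    | zero => rw [pow_zero, Ideal.one_eq_top, Submodule.top_smul]
    | succ j ih =>
      calc G ≤ n • G := hG
        _ ≤ n • (n ^ j • G) := Submodule.smul_mono le_rfl ih
        _ = (n * n ^ j) • G := (Submodule.smul_assoc _ _ _).symm
        _ = n ^ (j + 1) • G := by rw [← pow_succ']
  have := hiter k
  rw [hk, Submodule.bot_smul] at this
  exact le_bot_iff.mp this

/-- General form of the main statement: `π : V → W` a surjective `Λ`-linear map with kernel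
`n • ⊤` for a nilpotent ideal `n`, intertwining `A` and `Abar`. -/
theorem main_aux {C Λ V W : Type*} [Field C] [IsAlgClosed C]
    [CommRing Λ] [Algebra C Λ]
    [AddCommGroup V] [Module Λ V] [Module C V] [IsScalarTower C Λ V] [Module.Finite C V]
    [AddCommGroup W] [Module Λ W] [Module C W] [IsScalarTower C Λ W]
    (n : Ideal Λ) (hn : ∃ k : ℕ, n ^ k = ⊥)
    (A : V →ₗ[Λ] V) (Abar : W →ₗ[Λ] W) (π : V →ₗ[Λ] W)
    (hsurj : Function.Surjective π)
    (hker : LinearMap.ker π = (n • ⊤ : Submodule Λ V))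
    (hc : ∀ v : V, Abar (π v) = π (A v)) :
    (∀ ρ : C,
      Submodule.map (π.restrictScalars C)
          (Module.End.maxGenEigenspace (A.restrictScalars C) ρ) =
        Module.End.maxGenEigenspace (Abar.restrictScalars C) ρ) ∧
    (∀ ρ : C, Module.End.HasEigenvalue (Abar.restrictScalars C) ρ ↔
      Module.End.HasEigenvalue (A.restrictScalars C) ρ) := by
  classical
  set π' : V →ₗ[C] W := π.restrictScalars C with hπ'
  set A' : V →ₗ[C] V := A.restrictScalars C with hA'
  set B : W →ₗ[C] W := Abar.restrictScalars C with hB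
  have hsurj' : Function.Surjective π' := fun w => hsurj w
  -- commuting square, iterated
  have h1 : ∀ (ρ : C) (v : V), (B - ρ • 1) (π' v) = π' ((A' - ρ • 1) v) := by
    intro ρ v
    have hb : B (π' v) = π' (A v) := hc v
    have hs : ρ • π' v = π' (ρ • v) := (map_smul π' ρ v).symm
    simp only [LinearMap.sub_apply, LinearMap.smul_apply, Module.End.one_apply, hb, hs,
      ← map_sub]
    rfl
  have hcomm : ∀ (ρ : C) (k : ℕ) (v : V),
      ((B - ρ • 1) ^ k) (π' v) = π' (((A' - ρ • 1) ^ k) v) := by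
    intro ρ k
    induction k with
    | zero => intro v; rfl
    | succ k ih =>
      intro v
      rw [pow_succ', pow_succ', Module.End.mul_apply, Module.End.mul_apply, ih, h1]
  -- forward inclusion
  have hfwd : ∀ ρ : C, Submodule.map π' (Module.End.maxGenEigenspace A' ρ) ≤
      Module.End.maxGenEigenspace B ρ := by
    rintro ρ _ ⟨v, hv, rfl⟩
    obtain ⟨k, hk⟩ := (Module.End.mem_maxGenEigenspace A' ρ v).mp hv
    exact (Module.End.mem_maxGenEigenspace B ρ (π' v)).mpr
      ⟨k, by rw [hcomm ρ k v, hk, map_zero]⟩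
  have hsup : (⨆ ρ : C, Submodule.map π' (Module.End.maxGenEigenspace A' ρ)) = ⊤ := by
    rw [← Submodule.map_iSup, Module.End.iSup_maxGenEigenspace_eq_top,
      Submodule.map_top, LinearMap.range_eq_top.mpr hsurj']
  -- Part 1
  have hpart1 : ∀ ρ : C, Submodule.map π' (Module.End.maxGenEigenspace A' ρ) =
      Module.End.maxGenEigenspace B ρ := by
    intro ρ
    refine le_antisymm (hfwd ρ) fun x hx => ?_
    exact aux_mem_of_indep (Module.End.independent_maxGenEigenspace B) hfwd hx
      (hsup ▸ Submodule.mem_top)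
  refine ⟨hpart1, ?_⟩
  -- Λ-structure on generalized eigenspaces
  set m : ℕ := Module.finrank C V with hm
  set GΛ : C → Submodule Λ V :=
    fun σ => LinearMap.ker ((A - algebraMap C Λ σ • (1 : V →ₗ[Λ] V)) ^ m) with hGΛdef
  have happly : ∀ (σ : C) (k : ℕ) (v : V),
      ((A - algebraMap C Λ σ • (1 : V →ₗ[Λ] V)) ^ k) v = ((A' - σ • 1) ^ k) v := by
    intro σ k
    have h1' : ∀ v : V, (A - algebraMap C Λ σ • (1 : V →ₗ[Λ] V)) v = (A' - σ • 1) v := by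
      intro v
      simp only [LinearMap.sub_apply, LinearMap.smul_apply, Module.End.one_apply, hA',
        LinearMap.restrictScalars_apply, algebraMap_smul]
    induction k with
    | zero => intro v; rfl
    | succ k ih =>
      intro v
      rw [pow_succ', pow_succ', Module.End.mul_apply, Module.End.mul_apply, ih, h1']
  have hGmax : ∀ σ : C, Module.End.maxGenEigenspace A' σ = (GΛ σ).restrictScalars C := by
    intro σ
    have hfin : Module.End.maxGenEigenspace A' σ = Module.End.genEigenspace A' σ (m : ℕ∞) :=
      le_antisymm (Module.End.genEigenspace_le_genEigenspace_finrank A' σ ⊤)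
        ((Module.End.genEigenspace A' σ).monotone le_top)
    rw [hfin]
    ext v
    rw [Module.End.mem_genEigenspace_nat, Submodule.restrictScalars_mem]
    simp only [hGΛdef, LinearMap.mem_ker]
    rw [happly σ m v]
  -- key: maxGenEigenspace contained in n • ⊤ forces it to vanish
  have hkey : ∀ ρ : C, Module.End.maxGenEigenspace A' ρ ≤ (n • ⊤ : Submodule Λ V).restrictScalars C
      → Module.End.maxGenEigenspace A' ρ = ⊥ := by
    intro ρ hle
    have hWG : ∀ σ : C, ((n • GΛ σ : Submodule Λ V)).restrictScalars C ≤
        Module.End.maxGenEigenspace A' σ := by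
      intro σ
      rw [hGmax σ]
      intro v hv
      rw [Submodule.restrictScalars_mem] at hv ⊢
      exact Submodule.smul_le_right hv
    have hNsub : ∀ x : V, x ∈ (n • ⊤ : Submodule Λ V) →
        x ∈ ⨆ σ : C, ((n • GΛ σ : Submodule Λ V)).restrictScalars C := by
      intro x hx
      refine Submodule.smul_induction_on hx (fun a ha v _ => ?_) (fun y z hy hz =>
        Submodule.add_mem _ hy hz)
      have hv : v ∈ ⨆ σ : C, Module.End.maxGenEigenspace A' σ := by
        rw [Module.End.iSup_maxGenEigenspace_eq_top]; trivial
      refine Submodule.iSup_induction (motive := fun w => a • w ∈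
          ⨆ σ : C, ((n • GΛ σ : Submodule Λ V)).restrictScalars C) _ hv
        (fun σ w hw => ?_) (by simp)
        (fun y z hy hz => by simp only [smul_add]; exact Submodule.add_mem _ hy hz)
      have hw' : w ∈ GΛ σ := by rwa [hGmax σ, Submodule.restrictScalars_mem] at hw
      exact Submodule.mem_iSup_of_mem σ
        (Submodule.smul_mem_smul ha hw' : a • w ∈ (n • GΛ σ : Submodule Λ V))
    have hstep : GΛ ρ ≤ (n • GΛ ρ : Submodule Λ V) := by
      intro x hx
      have hx1 : x ∈ Module.End.maxGenEigenspace A' ρ := by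
        rw [hGmax ρ]; exact hx
      exact aux_mem_of_indep (Module.End.independent_maxGenEigenspace A') hWG hx1
        (hNsub x (hle hx1))
    rw [hGmax ρ, smul_nilpotent_eq_bot hn hstep]
    rfl
  -- Part 2
  intro ρ
  have hBiff : Module.End.HasEigenvalue B ρ ↔ Module.End.maxGenEigenspace B ρ ≠ ⊥ :=
    (Module.End.hasUnifEigenvalue_iff_hasUnifEigenvalue_one (k := (⊤ : ℕ∞))
      (by exact_mod_cast WithTop.top_pos)).symm
  have hAiff : Module.End.HasEigenvalue A' ρ ↔ Module.End.maxGenEigenspace A' ρ ≠ ⊥ :=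
    (Module.End.hasUnifEigenvalue_iff_hasUnifEigenvalue_one (k := (⊤ : ℕ∞))
      (by exact_mod_cast WithTop.top_pos)).symm
  rw [hBiff, hAiff, ← hpart1 ρ]
  constructor
  · intro h hbot
    exact h (by rw [hbot, Submodule.map_bot])
  · intro h hbot
    rw [← le_bot_iff, Submodule.map_le_iff_le_comap, Submodule.comap_bot] at hbot
    have hker' : LinearMap.ker π' = (n • ⊤ : Submodule Λ V).restrictScalars C := by
      rw [hπ', LinearMap.ker_restrictScalars, hker]
    rw [hker'] at hbot
    exact h (hkey ρ hbot)

/-- For a `Λ`-linear endomorphism `A` of a finite `Λ`-module `V` and a nilpotent ideal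
`n ⊆ Λ`, the image in `V̄ = V/nV` of each generalized eigenspace of `A` is the
corresponding generalized eigenspace of the induced endomorphism `Ā`, and `Ā` has the
same spectrum as `A`. -/
theorem stmt_4 {C Λ V : Type*} [Field C] [IsAlgClosed C] [CharZero C]
    [CommRing Λ] [Algebra C Λ] [FiniteDimensional C Λ]
    [AddCommGroup V] [Module Λ V] [Module.Finite Λ V]
    [Module C V] [IsScalarTower C Λ V]
    (n : Ideal Λ) (hn : ∃ k : ℕ, n ^ k = ⊥)
    (A : V →ₗ[Λ] V)
    (Abar : (V ⧸ (n • ⊤ : Submodule Λ V)) →ₗ[Λ] (V ⧸ (n • ⊤ : Submodule Λ V)))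
    (hAbar : ∀ v : V, Abar (Submodule.Quotient.mk v) = Submodule.Quotient.mk (A v)) :
    (∀ ρ : C,
      Submodule.map (((n • ⊤ : Submodule Λ V).mkQ).restrictScalars C)
          (Module.End.maxGenEigenspace (A.restrictScalars C) ρ) =
        Module.End.maxGenEigenspace (Abar.restrictScalars C) ρ) ∧
    (∀ ρ : C, Module.End.HasEigenvalue (Abar.restrictScalars C) ρ ↔
      Module.End.HasEigenvalue (A.restrictScalars C) ρ) := by
  haveI : Module.Finite C V := Module.Finite.trans Λ V
  exact main_aux n hn A Abar (n • ⊤ : Submodule Λ V).mkQ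
    (Submodule.mkQ_surjective _) (Submodule.ker_mkQ _)
    (fun v => by simpa using hAbar v)
end

section
/- Let C be an algebraically closed field of characteristic zero, and let (V, A) and (V', A') be finite-dimensional C-spaces with endomorphisms such that no element of {a' − a : a' an eigenvalue of A', a an eigenvalue of A} is a negative integer. Then every C[[x]]-linear map Φ : C[[x]] ⊗ V → C[[x]] ⊗ V' commuting with the Euler derivations D_A and D_{A'} is of the form id ⊗ φ for a unique C-linear φ : V → V' satisfying A'φ = φA. -/
open TensorProduct

section Aux
open Polynomial

lemma aux_comm_pow {C V V' : Type*} [Field C]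
    [AddCommGroup V] [Module C V] [AddCommGroup V'] [Module C V']
    (A : Module.End C V) (B : Module.End C V') (ψ : V →ₗ[C] V')
    (hψ : ∀ v, B (ψ v) = ψ (A v)) (k : ℕ) : ∀ v, (B^k) (ψ v) = ψ ((A^k) v) := by
  induction k with
  | zero => simp
  | succ n ih =>
    intro v
    rw [pow_succ, pow_succ]
    simp only [Module.End.mul_apply]
    rw [hψ v, ih (A v)]

lemma aux_comm_aeval {C V V' : Type*} [Field C]
    [AddCommGroup V] [Module C V] [AddCommGroup V'] [Module C V']
    (A : Module.End C V) (B : Module.End C V') (ψ : V →ₗ[C] V')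
    (hψ : ∀ v, B (ψ v) = ψ (A v)) (q : C[X]) : ∀ v, (aeval B q) (ψ v) = ψ ((aeval A q) v) := by
  induction q using Polynomial.induction_on' with
  | add p q hp hq => intro v; simp [hp v, hq v]
  | monomial n a =>
    intro v
    simp only [aeval_monomial, Module.End.mul_apply, Module.algebraMap_end_apply, map_smul]
    rw [aux_comm_pow A B ψ hψ n v]

lemma aux_prod_inj {C V' : Type*} [Field C]
    [AddCommGroup V'] [Module C V']
    (B : Module.End C V') (s : Multiset C) (h : ∀ a ∈ s, ¬ B.HasEigenvalue a) :
    Function.Injective (aeval B (s.map (fun a => X - Polynomial.C a)).prod) := by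
  induction s using Multiset.induction with
  | empty => simp; exact fun a b h => h
  | cons a s ih =>
    rw [Multiset.map_cons, Multiset.prod_cons, map_mul]
    have h1 : Function.Injective (aeval B (X - Polynomial.C a)) := by
      have : ¬ B.HasEigenvalue a := h a (Multiset.mem_cons_self a s)
      rw [Module.End.hasEigenvalue_iff, not_ne_iff, Module.End.eigenspace_def] at this
      have hker : LinearMap.ker (B - a • 1) = ⊥ := this
      rw [LinearMap.ker_eq_bot] at hker
      simpa [aeval_X, aeval_C, Module.algebraMap_end_eq_smul_id] using (show Function.Injective ⇑(B - a • (LinearMap.id : Module.End C V')) from hker)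
    have h2 := ih (fun b hb => h b (Multiset.mem_cons_of_mem hb))
    rw [Module.End.mul_eq_comp, LinearMap.coe_comp]
    exact Function.Injective.comp h1 h2

lemma aux_sylvester {C V V' : Type*} [Field C] [IsAlgClosed C]
    [AddCommGroup V] [Module C V] [FiniteDimensional C V]
    [AddCommGroup V'] [Module C V'] [FiniteDimensional C V']
    (A : Module.End C V) (B : Module.End C V')
    (h : ∀ a : C, A.HasEigenvalue a → ¬ B.HasEigenvalue a)
    (ψ : V →ₗ[C] V') (hψ : ∀ v, B (ψ v) = ψ (A v)) : ψ = 0 := by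
  have hint : IsIntegral C A := Algebra.IsIntegral.isIntegral A
  set p := minpoly C A with hp
  have hmon : p.Monic := minpoly.monic hint
  have hprod : p = (Multiset.map (fun a => X - Polynomial.C a) p.roots).prod :=
    (IsAlgClosed.splits p).eq_prod_roots_of_monic hmon
  have hBinj : Function.Injective (aeval B p) := by
    rw [hprod]
    exact aux_prod_inj B p.roots (fun a ha => h a
      (Module.End.hasEigenvalue_iff_isRoot.mpr (isRoot_of_mem_roots ha)))
  ext v
  have : (aeval B p) (ψ v) = 0 := by
    rw [aux_comm_aeval A B ψ hψ p v, minpoly.aeval]; simp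
  simpa using hBinj (by simpa using this)

/-- coefficient extraction is jointly zero only on 0 -/
lemma aux_coeff_ext {C V' : Type*} [Field C] [AddCommGroup V'] [Module C V']
    [FiniteDimensional C V'] (z : (PowerSeries C) ⊗[C] V')
    (h : ∀ n : ℕ, (TensorProduct.lid C V')
      ((LinearMap.rTensor V' (PowerSeries.coeff n)) z) = 0) : z = 0 := by
  classical
  set b := Module.finBasis C V' with hb
  have rep : ∀ w : (PowerSeries C) ⊗[C] V', ∃ f : Fin (Module.finrank C V') → PowerSeries C,
      w = ∑ i, (f i) ⊗ₜ[C] (b i) := by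
    intro w
    induction w using TensorProduct.induction_on with
    | zero => exact ⟨0, by simp⟩
    | tmul g v =>
      refine ⟨fun i => (b.repr v i) • g, ?_⟩
      conv_lhs => rw [← Module.Basis.sum_repr b v]
      rw [tmul_sum]
      refine Finset.sum_congr rfl (fun i _ => ?_)
      rw [tmul_smul, smul_tmul']
    | add x y hx hy =>
      obtain ⟨fx, rfl⟩ := hx
      obtain ⟨fy, rfl⟩ := hy
      exact ⟨fx + fy, by rw [← Finset.sum_add_distrib]; simp [add_tmul]⟩
  obtain ⟨f, rfl⟩ := rep z
  have hcoeff : ∀ n i, PowerSeries.coeff n (f i) = 0 := by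
    intro n
    have h' := h n
    simp only [map_sum, LinearMap.rTensor_tmul, lid_tmul] at h'
    exact Fintype.linearIndependent_iff.mp b.linearIndependent _ h'
  have : ∀ i, f i = 0 := fun i => PowerSeries.ext (fun n => by rw [hcoeff n i]; simp)
  simp [this]

end Aux

set_option maxHeartbeats 1000000 in
/-- If no element of `Sp(A') ⊖ Sp(A)` is a negative integer, then every horizontal
`C[[x]]`-linear map between the Euler connections `eul(V,A)` and `eul(V',A')` is of the
form `id ⊗ φ` for a unique `φ : V → V'`, and this `φ` satisfies `A'φ = φA`. -/
theorem stmt_11 {C V V' : Type*} [Field C] [IsAlgClosed C] [CharZero C]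
    [AddCommGroup V] [Module C V] [FiniteDimensional C V]
    [AddCommGroup V'] [Module C V'] [FiniteDimensional C V']
    (A : V →ₗ[C] V) (A' : V' →ₗ[C] V')
    (hsp : ∀ a a' : C, Module.End.HasEigenvalue A a → Module.End.HasEigenvalue A' a' →
      ∀ k : ℕ, 0 < k → a' - a ≠ -(k : C))
    (θ : PowerSeries C →ₗ[C] PowerSeries C)
    (hθ : ∀ (f : PowerSeries C) (n : ℕ),
      PowerSeries.coeff n (θ f) = (n : C) * PowerSeries.coeff n f)
    (D : (PowerSeries C) ⊗[C] V →ₗ[C] (PowerSeries C) ⊗[C] V)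
    (hD : ∀ (f : PowerSeries C) (v : V), D (f ⊗ₜ[C] v) = (θ f) ⊗ₜ[C] v + f ⊗ₜ[C] (A v))
    (D' : (PowerSeries C) ⊗[C] V' →ₗ[C] (PowerSeries C) ⊗[C] V')
    (hD' : ∀ (f : PowerSeries C) (v : V'),
      D' (f ⊗ₜ[C] v) = (θ f) ⊗ₜ[C] v + f ⊗ₜ[C] (A' v))
    (Φ : (PowerSeries C) ⊗[C] V →ₗ[PowerSeries C] (PowerSeries C) ⊗[C] V')
    (hΦ : ∀ x, D' (Φ x) = Φ (D x)) :
    ∃ φ : V →ₗ[C] V',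
      A' ∘ₗ φ = φ ∘ₗ A ∧
      (∀ (f : PowerSeries C) (v : V), Φ (f ⊗ₜ[C] v) = f ⊗ₜ[C] (φ v)) ∧
      ∀ ψ : V →ₗ[C] V', (∀ (f : PowerSeries C) (v : V), Φ (f ⊗ₜ[C] v) = f ⊗ₜ[C] (ψ v)) →
        ψ = φ := by
  classical
  -- coefficient maps
  set c : ℕ → ((PowerSeries C) ⊗[C] V' →ₗ[C] V') := fun n =>
    (TensorProduct.lid C V').toLinearMap ∘ₗ LinearMap.rTensor V' (PowerSeries.coeff n)
    with hc_def
  have hc : ∀ (n : ℕ) (f : PowerSeries C) (v : V'),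
      c n (f ⊗ₜ[C] v) = (PowerSeries.coeff n f) • v := by
    intro n f v
    simp [hc_def]
  -- θ kills 1
  have hθ1 : θ 1 = 0 := by
    ext n
    rw [hθ 1 n, PowerSeries.coeff_one]
    simp only [map_zero]
    split <;> simp_all
  -- the component maps
  set φf : ℕ → (V →ₗ[C] V') := fun n =>
    (c n) ∘ₗ (Φ.restrictScalars C) ∘ₗ ((TensorProduct.mk C (PowerSeries C) V) 1)
    with hφf_def
  have hφf : ∀ (n : ℕ) (v : V), φf n v = c n (Φ (1 ⊗ₜ[C] v)) := by
    intro n v; rfl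
  -- coefficients of D'
  have hcD' : ∀ (n : ℕ) (z : (PowerSeries C) ⊗[C] V'),
      c n (D' z) = (n : C) • c n z + A' (c n z) := by
    intro n z
    induction z using TensorProduct.induction_on with
    | zero => simp
    | tmul f v =>
      rw [hD', map_add, hc, hc, hc]
      rw [hθ f n, map_smul, mul_smul]
    | add x y hx hy => simp only [map_add, hx, hy, smul_add]; abel
  -- key recursion
  have hrel : ∀ (n : ℕ) (v : V),
      (n : C) • φf n v + A' (φf n v) = φf n (A v) := by
    intro n v
    have h1 := hΦ (1 ⊗ₜ[C] v)
    rw [hD 1 v, hθ1, zero_tmul, zero_add] at h1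
    have := congrArg (c n) h1
    rw [hcD'] at this
    rw [hφf, hφf, ← this]
  -- vanishing of higher components
  have hvanish : ∀ n : ℕ, 0 < n → φf n = 0 := by
    intro n hn
    set B : Module.End C V' := A' + (n : C) • 1 with hB
    have hBψ : ∀ v, B (φf n v) = φf n (A v) := by
      intro v
      have := hrel n v
      simp only [hB, LinearMap.add_apply, LinearMap.smul_apply, Module.End.one_apply]
      rw [add_comm]; exact this
    refine aux_sylvester A B ?_ (φf n) hBψ
    intro a ha hBa
    have hA' : Module.End.HasEigenvalue A' (a - n) := by
      have : B - a • 1 = A' - (a - (n:C)) • 1 := by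
        rw [hB, sub_smul]; abel
      rw [Module.End.hasEigenvalue_iff, Module.End.eigenspace_def, this] at hBa
      rw [Module.End.hasEigenvalue_iff, Module.End.eigenspace_def]
      exact hBa
    exact hsp a (a - n) ha hA' n hn (by ring)
  set φ : V →ₗ[C] V' := φf 0 with hφ
  have hcomm : A' ∘ₗ φ = φ ∘ₗ A := by
    ext v
    have := hrel 0 v
    simpa using this
  -- Φ(1 ⊗ v) = 1 ⊗ φ v
  have hone : ∀ v : V, Φ (1 ⊗ₜ[C] v) = 1 ⊗ₜ[C] (φ v) := by
    intro v
    have : Φ (1 ⊗ₜ[C] v) - 1 ⊗ₜ[C] (φ v) = 0 := by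
      apply aux_coeff_ext
      intro n
      have : c n (Φ (1 ⊗ₜ[C] v) - 1 ⊗ₜ[C] (φ v)) = 0 := by
        rw [map_sub, ← hφf, hc]
        rcases Nat.eq_zero_or_pos n with h0 | hpos
        · subst h0; simp [hφ]
        · rw [hvanish n hpos, PowerSeries.coeff_one]
          simp [Nat.pos_iff_ne_zero.mp hpos]
      simpa [hc_def] using this
    exact sub_eq_zero.mp this
  refine ⟨φ, hcomm, ?_, ?_⟩
  · intro f v
    have h1 : f ⊗ₜ[C] v = f • ((1 : PowerSeries C) ⊗ₜ[C] v) := by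
      rw [TensorProduct.smul_tmul', smul_eq_mul, mul_one]
    rw [h1, map_smul, hone v, TensorProduct.smul_tmul', smul_eq_mul, mul_one]
  · intro ψ hψ
    ext v
    have h1 : (1 : PowerSeries C) ⊗ₜ[C] (ψ v) = 1 ⊗ₜ[C] (φ v) := by
      rw [← hψ 1 v, hone v]
    have h2 := congrArg (c 0) h1
    rw [hc, hc] at h2
    simpa using h2
end

section
/- Let A be a commutative ring, Ω an A-module, d : A → Ω a derivation, and M a finitely generated A-module equipped with a connection ∇ : M → M ⊗_A Ω (an additive map satisfying ∇(am) = a∇(m) + m ⊗ d(a)). Then every Fitting ideal Fitt_r(M) of M is d-invariant, i.e. d(Fitt_r(M)) ⊆ Fitt_r(M)·Ω. -/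
open TensorProduct

/-- The `r`-th Fitting ideal of a finitely generated module `M` over a commutative ring
`A`: generated by the `(n-r)×(n-r)` minors of the relation matrices of presentations of
`M` by `n` generators (taking the supremum over all finite presentations). -/
def fittingIdeal (A : Type*) [CommRing A] (M : Type*) [AddCommGroup M] [Module A M]
    (r : ℕ) : Ideal A :=
  ⨆ (n : ℕ) (π : (Fin n → A) →ₗ[A] M) (_ : Function.Surjective π),
    Ideal.span {x : A |
      ∃ (s : Fin (n - r) → (Fin n → A)) (c : Fin (n - r) → Fin n),
        (∀ i, π (s i) = 0) ∧ x = Matrix.det (Matrix.of fun i j => s i (c j))}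

section Aux
variable {A Ω : Type*} [CommRing A] [AddCommGroup Ω] [Module A Ω]

lemma my_dprod (d : A → Ω) (h1 : d 1 = 0)
    (hd_mul : ∀ a b : A, d (a * b) = a • d b + b • d a)
    {ι : Type*} [DecidableEq ι] (S : Finset ι) (f : ι → A) :
    d (∏ i ∈ S, f i) = ∑ i ∈ S, (∏ j ∈ S.erase i, f j) • d (f i) := by
  induction S using Finset.induction_on with
  | empty => simpa using h1
  | @insert a S ha ih =>
    rw [Finset.prod_insert ha, hd_mul, ih, Finset.sum_insert ha,
      Finset.erase_insert ha, Finset.smul_sum]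
    rw [add_comm]
    congr 1
    apply Finset.sum_congr rfl
    intro i hi
    have hne : a ≠ i := fun h => ha (h ▸ hi)
    rw [smul_smul, ← Finset.prod_insert (fun h => ha (Finset.mem_of_mem_erase h)),
      ← Finset.erase_insert_of_ne hne]

lemma my_ddet (d : A → Ω) (hd_add : ∀ a b : A, d (a + b) = d a + d b)
    (h1 : d 1 = 0)
    (hd_mul : ∀ a b : A, d (a * b) = a • d b + b • d a)
    {m : ℕ} (X : Matrix (Fin m) (Fin m) A) :
    d X.det = ∑ σ : Equiv.Perm (Fin m), ∑ i : Fin m,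
      ((Equiv.Perm.sign σ : ℤ)) • ((∏ j ∈ Finset.univ.erase i, X (σ j) j) • d (X (σ i) i)) := by
  let D' : A →+ Ω := AddMonoidHom.mk' d hd_add
  have hD' : ∀ a, D' a = d a := fun a => rfl
  rw [Matrix.det_apply, ← hD', map_sum]
  apply Finset.sum_congr rfl
  intro σ _
  rw [Units.smul_def, map_zsmul, hD', my_dprod d h1 hd_mul, Finset.smul_sum]

lemma my_col_id {m : ℕ} (X : Matrix (Fin m) (Fin m) A) (i : Fin m) (v : Fin m → A) (l : Ω) :
    ∑ σ : Equiv.Perm (Fin m),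
      ((Equiv.Perm.sign σ : ℤ)) • ((∏ j ∈ Finset.univ.erase i, X (σ j) j) • (v (σ i) • l))
    = (X.updateCol i v).det • l := by
  rw [Matrix.det_apply, Finset.sum_smul]
  apply Finset.sum_congr rfl
  intro σ _
  have hprod : ∏ j, (X.updateCol i v) (σ j) j
      = v (σ i) * ∏ j ∈ Finset.univ.erase i, X (σ j) j := by
    rw [← Finset.mul_prod_erase Finset.univ _ (Finset.mem_univ i)]
    congr 1
    · exact Matrix.updateCol_self
    · exact Finset.prod_congr rfl fun j hj =>
        Matrix.updateCol_ne (Finset.ne_of_mem_erase hj)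
  rw [Units.smul_def, smul_assoc, hprod, smul_smul, mul_comm, mul_smul]

lemma my_row_id {m : ℕ} (X : Matrix (Fin m) (Fin m) A) (i' : Fin m) (u : Fin m → A) (l : Ω) :
    ∑ σ : Equiv.Perm (Fin m),
      ((Equiv.Perm.sign σ : ℤ)) • ((∏ j ∈ Finset.univ.erase (σ⁻¹ i'), X (σ j) j) • (u (σ⁻¹ i') • l))
    = (X.updateRow i' u).det • l := by
  rw [Matrix.det_apply, Finset.sum_smul]
  apply Finset.sum_congr rfl
  intro σ _
  have hprod : ∏ j, (X.updateRow i' u) (σ j) j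
      = u (σ⁻¹ i') * ∏ j ∈ Finset.univ.erase (σ⁻¹ i'), X (σ j) j := by
    rw [← Finset.mul_prod_erase Finset.univ _ (Finset.mem_univ (σ⁻¹ i'))]
    congr 1
    · rw [show σ (σ⁻¹ i') = i' from σ.apply_symm_apply i', Matrix.updateRow_self]
    · refine Finset.prod_congr rfl fun j hj => ?_
      have : σ j ≠ i' := by
        intro h
        exact Finset.ne_of_mem_erase hj (by rw [← h]; exact (σ.symm_apply_apply j).symm)
      exact congrFun (Matrix.updateRow_ne this) j
  rw [Units.smul_def, smul_assoc, hprod, smul_smul, mul_comm, mul_smul]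

lemma my_pi_tensor_decomp {n : ℕ} (x : (Fin n → A) ⊗[A] Ω) :
    ∃ w : Fin n → Ω, x = ∑ k, (Pi.single k 1 : Fin n → A) ⊗ₜ[A] w k := by
  induction x using TensorProduct.induction_on with
  | zero => exact ⟨0, by simp⟩
  | tmul v o =>
    refine ⟨fun k => v k • o, ?_⟩
    have : ∀ k, (Pi.single k 1 : Fin n → A) ⊗ₜ[A] (v k • o)
        = (Pi.single k (v k) : Fin n → A) ⊗ₜ[A] o := by
      intro k
      rw [tmul_smul, smul_tmul']
      congr 1
      ext j
      by_cases h : j = k <;> simp [h, Pi.single_apply]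
    rw [Finset.sum_congr rfl fun k _ => this k, ← TensorProduct.sum_tmul,
      Finset.univ_sum_single]
  | add x y hx hy =>
    obtain ⟨w1, h1⟩ := hx
    obtain ⟨w2, h2⟩ := hy
    exact ⟨w1 + w2, by simp [h1, h2, TensorProduct.tmul_add, Finset.sum_add_distrib]⟩

lemma my_extract {n : ℕ} (t w : Fin n → Ω)
    (h : (∑ k, (Pi.single k 1 : Fin n → A) ⊗ₜ[A] t k)
        = ∑ k, (Pi.single k 1 : Fin n → A) ⊗ₜ[A] w k) :
    t = w := by
  funext k
  let φ : (Fin n → A) ⊗[A] Ω →ₗ[A] Ω :=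
    (TensorProduct.lid A Ω).toLinearMap ∘ₗ LinearMap.rTensor Ω (LinearMap.proj k)
  have hφ : ∀ (v : Fin n → A) (o : Ω), φ (v ⊗ₜ[A] o) = v k • o := by
    intro v o; simp [φ]
  have := congrArg φ h
  simpa [map_sum, hφ, Pi.single_apply, Finset.sum_ite_eq'] using this

end Aux

/-- If a finitely generated `A`-module `M` carries a connection relative to a derivation
`d : A → Ω`, then every Fitting ideal of `M` is `d`-invariant:
`d(Fitt_r M) ⊆ Fitt_r(M)·Ω`. -/
theorem stmt_12 {A Ω M : Type*} [CommRing A] [AddCommGroup Ω] [Module A Ω]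
    [AddCommGroup M] [Module A M] [Module.Finite A M]
    (d : A → Ω)
    (hd_add : ∀ a b : A, d (a + b) = d a + d b)
    (hd_mul : ∀ a b : A, d (a * b) = a • d b + b • d a)
    (D : M →+ M ⊗[A] Ω)
    (hD : ∀ (a : A) (m : M), D (a • m) = a • D m + m ⊗ₜ[A] d a)
    (r : ℕ) :
    ∀ a ∈ fittingIdeal A M r, d a ∈ fittingIdeal A M r • (⊤ : Submodule A Ω) := by
  have h0 : d 0 = 0 := by
    have h := hd_add 0 0
    rw [add_zero] at h
    exact left_eq_add.mp h
  have h1 : d 1 = 0 := by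
    have h := hd_mul 1 1
    rw [mul_one, one_smul] at h
    exact left_eq_add.mp h
  set F := fittingIdeal A M r with hF
  -- the set of elements of F whose derivative lies in F • ⊤ is an ideal
  let T : Submodule A A :=
    { carrier := {a | a ∈ F ∧ d a ∈ F • (⊤ : Submodule A Ω)}
      add_mem' := fun ha hb => ⟨add_mem ha.1 hb.1, by
        rw [hd_add]; exact add_mem ha.2 hb.2⟩
      zero_mem' := ⟨zero_mem _, by rw [h0]; exact zero_mem _⟩
      smul_mem' := fun b a ha => ⟨Submodule.smul_mem _ b ha.1, by
        rw [smul_eq_mul, hd_mul]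
        exact add_mem (Submodule.smul_mem _ b ha.2)
          (Submodule.smul_mem_smul ha.1 trivial)⟩ }
  suffices hFT : F ≤ T by
    intro a ha
    exact (hFT ha).2
  refine iSup_le fun n => iSup_le fun π => iSup_le fun hπ => Ideal.span_le.mpr ?_
  -- generator membership in F
  have hgen : ∀ (s' : Fin (n - r) → (Fin n → A)) (c' : Fin (n - r) → Fin n),
      (∀ i, π (s' i) = 0) →
      Matrix.det (Matrix.of fun i j => s' i (c' j)) ∈ F := by
    intro s' c' hs'
    apply Submodule.mem_iSup_of_mem n
    apply Submodule.mem_iSup_of_mem π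
    apply Submodule.mem_iSup_of_mem hπ
    exact Ideal.subset_span ⟨s', c', hs', rfl⟩
  -- basis vectors and connection matrix
  set e : Fin n → (Fin n → A) := fun k => Pi.single k 1 with he
  have hsurj : Function.Surjective (LinearMap.rTensor Ω π) :=
    LinearMap.rTensor_surjective Ω hπ
  have hωex : ∀ j : Fin n, ∃ w : Fin n → Ω,
      D (π (e j)) = ∑ k, π (e k) ⊗ₜ[A] w k := by
    intro j
    obtain ⟨y, hy⟩ := hsurj (D (π (e j)))
    obtain ⟨w, rfl⟩ := my_pi_tensor_decomp y
    refine ⟨w, ?_⟩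
    rw [← hy, map_sum]
    exact Finset.sum_congr rfl fun k _ => by rw [LinearMap.rTensor_tmul]
  choose ω hω using hωex
  -- every relation u gives relations on derivatives
  have hrel : ∀ u : Fin n → A, π u = 0 →
      ∃ S : Finset ((LinearMap.ker π) × Ω),
        ∀ k, d (u k) + ∑ j, u j • ω j k = ∑ p ∈ S, p.1.1 k • p.2 := by
    intro u hu
    have hu1 : u = ∑ j, u j • e j := by
      funext j'
      simp [he, Pi.single_apply, Finset.sum_apply]
    have key : (∑ k, π (e k) ⊗ₜ[A] (d (u k) + ∑ j, u j • ω j k)) = 0 := by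
      have step : ∀ j, D (π (u j • e j))
          = (∑ k, π (e k) ⊗ₜ[A] (u j • ω j k)) + π (e j) ⊗ₜ[A] d (u j) := by
        intro j
        rw [map_smul, hD, hω j, Finset.smul_sum]
        congr 1
        exact Finset.sum_congr rfl fun k _ => (tmul_smul _ _ _).symm
      have expand : D (π u) = ∑ k, π (e k) ⊗ₜ[A] (d (u k) + ∑ j, u j • ω j k) := by
        conv_lhs => rw [hu1]
        rw [map_sum, map_sum]
        rw [Finset.sum_congr rfl fun j _ => step j, Finset.sum_add_distrib,
          Finset.sum_comm]
        simp only [TensorProduct.tmul_add, TensorProduct.tmul_sum,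
          Finset.sum_add_distrib]
        rw [add_comm]
      rw [hu, map_zero] at expand
      exact expand.symm
    -- exactness
    have hex : Function.Exact (LinearMap.rTensor Ω (LinearMap.ker π).subtype)
        (LinearMap.rTensor Ω π) :=
      rTensor_exact Ω (LinearMap.exact_subtype_ker_map π) hπ
    have hker : (LinearMap.rTensor Ω π)
        (∑ k, e k ⊗ₜ[A] (d (u k) + ∑ j, u j • ω j k)) = 0 := by
      rw [map_sum]
      rw [Finset.sum_congr rfl fun k _ => by rw [LinearMap.rTensor_tmul]]
      exact key
    obtain ⟨y, hy⟩ := (hex _).mp hker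
    obtain ⟨S, rfl⟩ := TensorProduct.exists_finset y
    refine ⟨S, ?_⟩
    have hy2 : (∑ k, e k ⊗ₜ[A] (d (u k) + ∑ j, u j • ω j k))
        = ∑ k, e k ⊗ₜ[A] (∑ p ∈ S, p.1.1 k • p.2) := by
      rw [← hy, map_sum]
      have : ∀ p : (LinearMap.ker π) × Ω, p ∈ S →
          (LinearMap.rTensor Ω (LinearMap.ker π).subtype) (p.1 ⊗ₜ[A] p.2)
          = ∑ k, e k ⊗ₜ[A] (p.1.1 k • p.2) := by
        intro p _
        rw [LinearMap.rTensor_tmul]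
        have hp : (p.1 : Fin n → A) = ∑ k, (p.1 : Fin n → A) k • e k := by
          funext j'
          simp [he, Pi.single_apply, Finset.sum_apply]
        conv_lhs => rw [show ((LinearMap.ker π).subtype p.1 : Fin n → A) = (p.1 : Fin n → A) from rfl, hp]
        rw [TensorProduct.sum_tmul]
        exact Finset.sum_congr rfl fun k _ => by
          rw [TensorProduct.smul_tmul, tmul_smul]
      rw [Finset.sum_congr rfl this, Finset.sum_comm]
      exact Finset.sum_congr rfl fun k _ => (TensorProduct.tmul_sum _ _ _).symm
    have := my_extract _ _ hy2
    exact fun k => congrFun this k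
  -- main computation for a generator
  rintro x ⟨s, c, hs, rfl⟩
  refine ⟨hgen s c hs, ?_⟩
  set X : Matrix (Fin (n - r)) (Fin (n - r)) A := Matrix.of fun i j => s i (c j) with hX
  choose S hS using fun i' => hrel (s i') (hs i')
  have hdX : ∀ (i' : Fin (n - r)) (i : Fin (n - r)),
      d (X i' i) = (∑ p ∈ S i', p.1.1 (c i) • p.2) - ∑ l, s i' l • ω l (c i) := by
    intro i' i
    have := hS i' (c i)
    have hXa : X i' i = s i' (c i) := rfl
    rw [hXa]
    exact eq_sub_of_add_eq this
  -- the two target sums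
  have hmain : d X.det =
      (∑ i' : Fin (n - r), ∑ p ∈ S i',
        (X.updateRow i' (fun j => p.1.1 (c j))).det • p.2)
      - ∑ i : Fin (n - r), ∑ l : Fin n,
        (X.updateCol i (fun i'' => s i'' l)).det • ω l (c i) := by
    rw [my_ddet d hd_add h1 hd_mul X]
    have split : ∀ σ : Equiv.Perm (Fin (n - r)), ∀ i : Fin (n - r),
        ((Equiv.Perm.sign σ : ℤ)) • ((∏ j ∈ Finset.univ.erase i, X (σ j) j) • d (X (σ i) i))
        = ((Equiv.Perm.sign σ : ℤ)) • ((∏ j ∈ Finset.univ.erase i, X (σ j) j) •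
            (∑ p ∈ S (σ i), p.1.1 (c i) • p.2))
          - ((Equiv.Perm.sign σ : ℤ)) • ((∏ j ∈ Finset.univ.erase i, X (σ j) j) •
            (∑ l, s (σ i) l • ω l (c i))) := by
      intro σ i
      rw [hdX (σ i) i, smul_sub, smul_sub]
    rw [Finset.sum_congr rfl fun σ _ => Finset.sum_congr rfl fun i _ => split σ i]
    simp only [Finset.sum_sub_distrib]
    congr 1
    · -- term A
      have reindex : ∀ σ : Equiv.Perm (Fin (n - r)),
          (∑ i : Fin (n - r), ((Equiv.Perm.sign σ : ℤ)) •
            ((∏ j ∈ Finset.univ.erase i, X (σ j) j) •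
              (∑ p ∈ S (σ i), p.1.1 (c i) • p.2)))
          = ∑ i' : Fin (n - r), ((Equiv.Perm.sign σ : ℤ)) •
            ((∏ j ∈ Finset.univ.erase (σ⁻¹ i'), X (σ j) j) •
              (∑ p ∈ S i', p.1.1 (c (σ⁻¹ i')) • p.2)) := by
        intro σ
        rw [← Equiv.sum_comp (σ : Equiv.Perm (Fin (n - r)))
          (fun i' => ((Equiv.Perm.sign σ : ℤ)) •
            ((∏ j ∈ Finset.univ.erase (σ⁻¹ i'), X (σ j) j) •
              (∑ p ∈ S i', p.1.1 (c (σ⁻¹ i')) • p.2)))]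
        exact Finset.sum_congr rfl fun i _ => by
          simp only [show σ⁻¹ (σ i) = i from σ.symm_apply_apply i]
      rw [Finset.sum_congr rfl fun σ _ => reindex σ, Finset.sum_comm]
      refine Finset.sum_congr rfl fun i' _ => ?_
      have push : ∀ σ : Equiv.Perm (Fin (n - r)),
          ((Equiv.Perm.sign σ : ℤ)) •
            ((∏ j ∈ Finset.univ.erase (σ⁻¹ i'), X (σ j) j) •
              (∑ p ∈ S i', p.1.1 (c (σ⁻¹ i')) • p.2))
          = ∑ p ∈ S i', ((Equiv.Perm.sign σ : ℤ)) •
              ((∏ j ∈ Finset.univ.erase (σ⁻¹ i'), X (σ j) j) •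
                (p.1.1 (c (σ⁻¹ i')) • p.2)) := by
        intro σ
        rw [Finset.smul_sum, Finset.smul_sum]
      rw [Finset.sum_congr rfl fun σ _ => push σ, Finset.sum_comm]
      refine Finset.sum_congr rfl fun p _ => ?_
      exact my_row_id X i' (fun j => p.1.1 (c j)) p.2
    · -- term B
      rw [Finset.sum_comm]
      refine Finset.sum_congr rfl fun i _ => ?_
      have push : ∀ σ : Equiv.Perm (Fin (n - r)),
          ((Equiv.Perm.sign σ : ℤ)) •
            ((∏ j ∈ Finset.univ.erase i, X (σ j) j) • (∑ l, s (σ i) l • ω l (c i)))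
          = ∑ l, ((Equiv.Perm.sign σ : ℤ)) •
              ((∏ j ∈ Finset.univ.erase i, X (σ j) j) • (s (σ i) l • ω l (c i))) := by
        intro σ
        rw [Finset.smul_sum, Finset.smul_sum]
      rw [Finset.sum_congr rfl fun σ _ => push σ, Finset.sum_comm]
      refine Finset.sum_congr rfl fun l _ => ?_
      exact my_col_id X i (fun i'' => s i'' l) (ω l (c i))
  rw [hmain]
  refine sub_mem ?_ ?_
  · refine Submodule.sum_mem _ fun i' _ => Submodule.sum_mem _ fun p _ => ?_
    refine Submodule.smul_mem_smul ?_ trivial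
    have hrow : X.updateRow i' (fun j => p.1.1 (c j))
        = Matrix.of fun i'' j => (Function.update s i' (p.1.1 : Fin n → A)) i'' (c j) := by
      ext i'' j
      by_cases h : i'' = i'
      · subst h; simp [Matrix.updateRow_self, Function.update_self]
      · simp [Matrix.updateRow_ne h, Function.update_of_ne h, hX]
    rw [hrow]
    refine hgen _ c fun i'' => ?_
    by_cases h : i'' = i'
    · subst h; simp only [Function.update_self]; exact p.1.2
    · simp only [Function.update_of_ne h]; exact hs i''
  · refine Submodule.sum_mem _ fun i _ => Submodule.sum_mem _ fun l _ => ?_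
    refine Submodule.smul_mem_smul ?_ trivial
    have hcol : X.updateCol i (fun i'' => s i'' l)
        = Matrix.of fun i'' j => s i'' ((Function.update c i l) j) := by
      ext i'' j
      by_cases h : j = i
      · subst h; simp [Matrix.updateCol_self, Function.update_self]
      · simp [Matrix.updateCol_ne h, Function.update_of_ne h, hX]
    rw [hcol]
    exact hgen s (Function.update c i l) hs
end

section
/- Let C be an algebraically closed field of characteristic zero and let M be a finite C[x, x⁻¹]-module equipped with a C-linear map ∇ : M → M satisfying ∇(fm) = ϑ(f)m + f∇(m) for ϑ = x·d/dx. Then M is a free C[x, x⁻¹]-module. -/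
open LaurentPolynomial Polynomial

open LaurentPolynomial Polynomial

-- PID
theorem laurent_pid (C : Type*) [Field C] : IsPrincipalIdealRing (LaurentPolynomial C) := by
  have := LaurentPolynomial.isLocalization (R := C)
  constructor
  intro J
  obtain ⟨g, hg⟩ := (IsPrincipalIdealRing.principal
    (J.comap (algebraMap C[X] (LaurentPolynomial C))))
  refine ⟨⟨algebraMap C[X] (LaurentPolynomial C) g, ?_⟩⟩
  conv_lhs => rw [← IsLocalization.map_comap (Submonoid.powers (X : C[X])) (LaurentPolynomial C) J]
  rw [Ideal.under_def, hg]
  simp [Ideal.map_span, Ideal.submodule_span_eq]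

theorem laurent_domain (C : Type*) [Field C] : IsDomain (LaurentPolynomial C) :=
  NoZeroDivisors.to_isDomain _

theorem laurent_noeth (C : Type*) [Field C] : IsNoetherianRing (LaurentPolynomial C) := by
  have := LaurentPolynomial.isLocalization (R := C)
  exact IsLocalization.isNoetherianRing (Submonoid.powers (X : C[X])) _ inferInstance
open LaurentPolynomial Polynomial

-- from a nonzero Laurent polynomial, get p with p.coeff 0 ≠ 0 generating the same-ish ideal:
-- toLaurent p = g * unit
theorem laurent_assoc {C : Type*} [Field C] (g : LaurentPolynomial C) (hg : g ≠ 0) :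
    ∃ (p : C[X]) (u : LaurentPolynomial C), IsUnit u ∧ p.coeff 0 ≠ 0 ∧ p.toLaurent = g * u := by
  obtain ⟨n, f', hf'⟩ := g.exists_T_pow
  have hf0 : f' ≠ 0 := by
    intro h
    rw [h] at hf'
    simp only [map_zero] at hf'
    exact hg ((IsUnit.mul_left_eq_zero (isUnit_T (n:ℤ))).mp hf'.symm)
  obtain ⟨q, hq, hnd⟩ := f'.exists_eq_pow_rootMultiplicity_mul_and_not_dvd hf0 0
  simp only [map_zero, sub_zero] at hq hnd
  refine ⟨q, T (n : ℤ) * T (-(rootMultiplicity 0 f' : ℤ)), (isUnit_T _).mul (isUnit_T _), ?_, ?_⟩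
  · rw [X_dvd_iff] at hnd; exact hnd
  · have : toLaurent f' = T ((rootMultiplicity 0 f' : ℤ)) * toLaurent q := by
      conv_lhs => rw [hq, map_mul, Polynomial.toLaurent_X_pow]
    rw [← mul_assoc, ← hf', this]
    rw [mul_comm (T _), mul_assoc, ← T_add]
    simp
open LaurentPolynomial Polynomial

theorem aeval_mk_eq {C : Type*} [Field C] (I : Ideal (LaurentPolynomial C)) (f : C[X]) :
    aeval ((Ideal.Quotient.mkₐ C I) (T 1)) f = Ideal.Quotient.mkₐ C I f.toLaurent := by
  have h1 : aeval (((Ideal.Quotient.mkₐ C I).comp toLaurentAlg) X) f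
      = ((Ideal.Quotient.mkₐ C I).comp toLaurentAlg) (aeval X f) :=
    aeval_algHom_apply _ _ _
  simpa [toLaurentAlg_apply, Polynomial.toLaurent_X] using h1

theorem quot_finite (C : Type*) [Field C] (p : C[X]) (hp0 : p.coeff 0 ≠ 0) :
    Module.Finite C ((LaurentPolynomial C) ⧸ (Ideal.span {p.toLaurent})) := by
  set R := LaurentPolynomial C
  set I : Ideal R := Ideal.span {p.toLaurent} with hI
  set A := R ⧸ I with hA
  have hp : p ≠ 0 := fun h => hp0 (by simp [h])
  let mk : R →+* A := Ideal.Quotient.mk I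
  have hmkp : mk p.toLaurent = 0 :=
    Ideal.Quotient.eq_zero_iff_mem.mpr (Ideal.subset_span rfl)
  have hroot : aeval (Ideal.Quotient.mkₐ C I (T 1)) p = 0 := by
    rw [aeval_mk_eq]
    exact Ideal.Quotient.eq_zero_iff_mem.mpr (Ideal.subset_span rfl)
  let φ : AdjoinRoot p →ₐ[C] A := AdjoinRoot.liftAlgHom p (Algebra.ofId C A) (Ideal.Quotient.mkₐ C I (T 1)) hroot
  have hφmk : ∀ f : C[X], φ (AdjoinRoot.mk p f) = mk f.toLaurent := by
    intro f
    show AdjoinRoot.liftAlgHom _ _ _ hroot _ = _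
    exact aeval_mk_eq I f
  set c := p.coeff 0
  set q : C[X] := Polynomial.C (-(c⁻¹)) * p.divX with hq
  have hXq : X * q = Polynomial.C (-(c⁻¹)) * p + 1 := by
    have h1 : X * p.divX = p - Polynomial.C c := by
      have := X_mul_divX_add p
      linear_combination this
    rw [hq]
    rw [mul_left_comm, h1, mul_sub, ← Polynomial.C_mul]
    field_simp
    rw [show Polynomial.C (-1 : C) = -1 by simp, sub_neg_eq_add]
  have key : mk (T 1) * mk q.toLaurent = 1 := by
    rw [← map_mul, ← Polynomial.toLaurent_X, ← map_mul, hXq]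
    rw [map_add, map_mul, map_one, map_add, map_mul, hmkp, mul_zero, zero_add, map_one]
  have hT1 : mk (T (-1)) = mk q.toLaurent := by
    calc mk (T (-1)) = mk (T (-1)) * (mk (T 1) * mk q.toLaurent) := by rw [key, mul_one]
    _ = mk (T (-1) * T 1) * mk q.toLaurent := by rw [← mul_assoc, ← map_mul]
    _ = mk q.toLaurent := by rw [← T_add]; norm_num
  have hsurj : Function.Surjective φ := by
    intro a
    obtain ⟨f, rfl⟩ := Ideal.Quotient.mk_surjective a
    suffices h : mk f ∈ φ.range by
      exact (AlgHom.mem_range φ).mp h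
    refine LaurentPolynomial.induction_on_mul_T f ?_
    intro g n
    have h1 : mk g.toLaurent ∈ φ.range := (AlgHom.mem_range φ).mpr ⟨AdjoinRoot.mk p g, hφmk g⟩
    have h2 : mk (T (-(n:ℤ))) ∈ φ.range := by
      have hTn : (T (-(n:ℤ)) : R) = (T (-1))^n := by rw [T_pow]; norm_num
      rw [hTn, map_pow, hT1]
      exact pow_mem ((AlgHom.mem_range φ).mpr ⟨AdjoinRoot.mk p q, hφmk q⟩) n
    rw [map_mul]
    exact mul_mem h1 h2
  haveI : Module.Finite C (AdjoinRoot p) := Module.Finite.of_basis (AdjoinRoot.powerBasis hp).basis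
  exact Module.Finite.of_surjective φ.toLinearMap hsurj
set_option maxHeartbeats 1000000 in
set_option synthInstance.maxHeartbeats 400000 in
/-- A finitely generated module over the Laurent polynomial ring `C[x, x⁻¹]` equipped
with a connection relative to the derivation `ϑ = x·d/dx` is free. -/

theorem stmt_17 {C M : Type*} [Field C] [IsAlgClosed C] [CharZero C]
    [AddCommGroup M] [Module (LaurentPolynomial C) M] [Module.Finite (LaurentPolynomial C) M]
    [Module C M] [IsScalarTower C (LaurentPolynomial C) M]
    (θ : LaurentPolynomial C →ₗ[C] LaurentPolynomial C)
    (hθ : ∀ n : ℤ, θ (LaurentPolynomial.T n) = n • LaurentPolynomial.T n)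
    (D : M →ₗ[C] M)
    (hD : ∀ (f : LaurentPolynomial C) (m : M), D (f • m) = θ f • m + f • D m) :
    Module.Free (LaurentPolynomial C) M := by
  haveI hdom : IsDomain (LaurentPolynomial C) := NoZeroDivisors.to_isDomain _
  haveI hpid : IsPrincipalIdealRing (LaurentPolynomial C) := laurent_pid C
  haveI hnoeth : IsNoetherianRing (LaurentPolynomial C) := laurent_noeth C
  haveI : IsNoetherian (LaurentPolynomial C) M := isNoetherian_of_isNoetherianRing_of_finite _ _
  set N : Submodule (LaurentPolynomial C) M := Submodule.torsion (LaurentPolynomial C) M with hN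
  suffices hbot : N = ⊥ by
    haveI : Module.IsTorsionFree (LaurentPolynomial C) M :=
      (Submodule.isTorsionFree_iff_torsion_eq_bot).mpr hbot
    exact Module.free_of_finite_type_torsion_free'
  -- D preserves torsion
  have hDN : ∀ m ∈ N, D m ∈ N := by
    intro m hm
    obtain ⟨a, ha⟩ := (Submodule.mem_torsion_iff m).mp hm
    rw [Submonoid.smul_def] at ha
    refine (Submodule.mem_torsion_iff _).mpr ⟨a * a, ?_⟩
    rw [Submonoid.smul_def]
    have h1 : D ((a : LaurentPolynomial C) • m)
        = θ (a : LaurentPolynomial C) • m + (a : LaurentPolynomial C) • D m := hD a m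
    rw [ha, map_zero] at h1
    have h2 : (a : LaurentPolynomial C) • D m = -(θ (a : LaurentPolynomial C) • m) :=
      eq_neg_of_add_eq_zero_right h1.symm
    calc ((a * a : nonZeroDivisors (LaurentPolynomial C)) : LaurentPolynomial C) • D m
        = (a : LaurentPolynomial C) • ((a : LaurentPolynomial C) • D m) := by
          rw [Submonoid.coe_mul, mul_smul]
      _ = (a : LaurentPolynomial C) • -(θ (a : LaurentPolynomial C) • m) := by rw [h2]
      _ = -(θ (a : LaurentPolynomial C) • ((a : LaurentPolynomial C) • m)) := by
          rw [smul_neg, smul_comm]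
      _ = 0 := by rw [ha, smul_zero, neg_zero]
  -- a nonzero annihilator of N
  have hfg : N.FG := IsNoetherian.noetherian N
  obtain ⟨s, hs⟩ := hfg
  classical
  have hann : ∃ g : LaurentPolynomial C, g ≠ 0 ∧ ∀ m ∈ N, g • m = 0 := by
    choose F hF using fun x : {x // x ∈ s} =>
      (Submodule.mem_torsion_iff (x : M)).mp (hs ▸ Submodule.subset_span x.2)
    have hF' : ∀ x, (F x : LaurentPolynomial C) • (x : M) = 0 := by
      intro x; rw [← Submonoid.smul_def]; exact hF x
    refine ⟨∏ x ∈ s.attach, (F x : LaurentPolynomial C), ?_, ?_⟩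
    · exact Finset.prod_ne_zero_iff.mpr fun x _ => nonZeroDivisors.coe_ne_zero (F x)
    · intro m hm
      rw [← hs] at hm
      induction hm using Submodule.span_induction with
      | mem x hx =>
        rw [← Finset.mul_prod_erase s.attach _ (Finset.mem_attach s ⟨x, hx⟩), mul_comm, mul_smul,
          hF' ⟨x, hx⟩, smul_zero]
      | zero => rw [smul_zero]
      | add x y _ _ hx hy => rw [smul_add, hx, hy, add_zero]
      | smul r x _ hx => rw [smul_comm, hx, smul_zero]
  obtain ⟨g, hg0, hgann⟩ := hann
  obtain ⟨p, u, hu, hp0, hpu⟩ := laurent_assoc g hg0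
  set I : Ideal (LaurentPolynomial C) := Ideal.span {p.toLaurent} with hI
  have htorsBy : Module.IsTorsionBy (LaurentPolynomial C) ↥N p.toLaurent := by
    intro n
    have h0 : p.toLaurent • (n : M) = 0 := by
      rw [hpu, mul_comm, mul_smul, hgann (n : M) n.2, smul_zero]
    exact Subtype.ext h0
  have htors : Module.IsTorsionBySet (LaurentPolynomial C) ↥N I := by
    rw [hI, ← Ideal.submodule_span_eq]
    exact (Module.isTorsionBySet_span_singleton_iff _).mpr htorsBy
  letI : Module ((LaurentPolynomial C) ⧸ I) ↥N := htors.module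
  haveI t1 : IsScalarTower (LaurentPolynomial C) ((LaurentPolynomial C) ⧸ I) ↥N :=
    Module.IsTorsionBySet.isScalarTower htors
  haveI t2 : IsScalarTower C ((LaurentPolynomial C) ⧸ I) ↥N :=
    Module.IsTorsionBySet.isScalarTower htors
  haveI : Module.Finite (LaurentPolynomial C) ↥N :=
    Module.Finite.iff_fg.mpr (IsNoetherian.noetherian N)
  haveI : Module.Finite ((LaurentPolynomial C) ⧸ I) ↥N :=
    Module.Finite.of_restrictScalars_finite (LaurentPolynomial C) _ _
  haveI : Module.Finite C ((LaurentPolynomial C) ⧸ I) := quot_finite C p hp0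
  haveI : Module.Finite C ↥N := Module.Finite.trans ((LaurentPolynomial C) ⧸ I) ↥N
  -- the trace argument
  let e : ↥N ≃ₗ[C] ↥N := LinearEquiv.ofLinear
    ((LinearMap.lsmul (LaurentPolynomial C) ↥N (T 1)).restrictScalars C)
    ((LinearMap.lsmul (LaurentPolynomial C) ↥N (T (-1))).restrictScalars C)
    (by
      ext n
      simp only [LinearMap.coe_comp, LinearMap.coe_restrictScalars, Function.comp_apply,
        LinearMap.lsmul_apply, LinearMap.id_coe, id_eq, SetLike.val_smul, smul_smul]
      rw [← T_add]
      norm_num [T_zero])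
    (by
      ext n
      simp only [LinearMap.coe_comp, LinearMap.coe_restrictScalars, Function.comp_apply,
        LinearMap.lsmul_apply, LinearMap.id_coe, id_eq, SetLike.val_smul, smul_smul]
      rw [← T_add]
      norm_num [T_zero])
  let D' : ↥N →ₗ[C] ↥N :=
    { toFun := fun n => ⟨D n, hDN n n.2⟩
      map_add' := fun a b => Subtype.ext (by simp)
      map_smul' := fun c a => Subtype.ext (by simp) }
  have hrel : ∀ n : ↥N, (e.symm.conj D') n = ((LinearMap.id : ↥N →ₗ[C] ↥N) + D') n := by
    intro n
    rw [LinearEquiv.conj_apply, LinearEquiv.symm_symm]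
    apply Subtype.ext
    show (T (-1) : LaurentPolynomial C) • (D ((T 1 : LaurentPolynomial C) • (n : M)))
        = (n : M) + D (n : M)
    rw [hD, hθ 1, one_smul, smul_add, smul_smul, smul_smul, ← T_add]
    norm_num [T_zero]
  have heq : e.symm.conj D' = (LinearMap.id : ↥N →ₗ[C] ↥N) + D' := LinearMap.ext hrel
  have htr := LinearMap.trace_conj' D' e.symm
  rw [heq, map_add, LinearMap.trace_id] at htr
  have hzero : (Module.finrank C ↥N : C) = 0 := by
    have := add_right_cancel (htr.trans (zero_add _).symm)
    exact this
  have hrank : Module.finrank C ↥N = 0 := by exact_mod_cast hzero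
  haveI : Subsingleton ↥N := Module.finrank_zero_iff.mp hrank
  exact Submodule.eq_bot_of_subsingleton
end
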